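/- Let G be a simple graph on n vertices, let UB and LB be, respectively, an upper and a lower bound of χ_eq(G), and let Π = (C_1, ..., C_k; U) be a partial k-coloring of G with k < UB, and set M = max{|C_r| : 1 ≤ r ≤ k}. If Π can be extended to an r-eqcol of G for some r with k ≤ r < UB, then M ≤ ⌈n / max{k, LB}⌉ (property P.2). -/

import Mathlib

/-- `C₁, …, C_k` is a partial `k`-coloring of `G`: the classes are nonempty,
pairwise disjoint independent (stable) sets of vertices. -/
def IsPartialColoring {V : Type*} (G : SimpleGraph V) {k : ℕ}
    (C : Fin k → Finset V) : Prop :=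
  (∀ j, (C j).Nonempty) ∧
  (∀ j, ∀ u ∈ C j, ∀ v ∈ C j, ¬ G.Adj u v) ∧
  (∀ i j, i ≠ j → Disjoint (C i) (C j))

/-- `C₁, …, C_k` is an equitable `k`-coloring (`k`-eqcol) of `G`: a partition of the
vertex set into `k` nonempty independent sets whose sizes pairwise differ by at most one. -/
def IsEqCol {V : Type*} [Fintype V] [DecidableEq V] (G : SimpleGraph V) {k : ℕ}
    (C : Fin k → Finset V) : Prop :=
  IsPartialColoring G C ∧
  Finset.univ.biUnion C = Finset.univ ∧
  ∀ i j, |((C i).card : ℤ) - ((C j).card : ℤ)| ≤ 1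

/-- The equitable chromatic number `χ_eq(G)`: the least `k` such that `G` admits
an equitable `k`-coloring. -/
noncomputable def eqChrom {V : Type*} [Fintype V] [DecidableEq V] (G : SimpleGraph V) : ℕ :=
  sInf {k : ℕ | ∃ C : Fin k → Finset V, IsEqCol G C}

/-- **Property P.2.**  If a partial `k`-coloring of `G` (with `k < UB`,
`UB` and `LB` upper and lower bounds of `χ_eq(G)`, `M` the largest class size) can be
extended to an `r`-eqcol of `G` with `k ≤ r < UB`, then `M ≤ ⌈n / max{k, LB}⌉`. -/
theorem property_P2 {V : Type*} [Fintype V] [DecidableEq V] (G : SimpleGraph V)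
    (n UB LB k : ℕ) (hn : n = Fintype.card V)
    (hUB : eqChrom G ≤ UB) (hLB : LB ≤ eqChrom G)
    (C : Fin k → Finset V) (hC : IsPartialColoring G C)
    (hk : 0 < k) (hkUB : k < UB)
    (M : ℕ) (hM : M = Finset.univ.sup fun j => (C j).card)
    (U : Finset V) (hU : U = Finset.univ \ Finset.univ.biUnion C)
    (r : ℕ) (hkr : k ≤ r) (hrUB : r < UB)
    (C' : Fin r → Finset V) (hC' : IsEqCol G C')
    (hext : ∀ j : Fin k, C j ⊆ C' (Fin.castLE hkr j)) :
    M ≤ n ⌈/⌉ max k LB := by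
  -- r is positive
  have hr : 0 < r := lt_of_lt_of_le hk hkr
  obtain ⟨⟨hne, hind, hdisj⟩, hcover, heq⟩ := hC'
  -- the total number of vertices is the sum of the class sizes
  have hsum : (∑ j : Fin r, (C' j).card) = n := by
    rw [hn, ← Finset.card_univ, ← hcover, Finset.card_biUnion]
    intro i _ j _ hij
    exact hdisj i j hij
  -- each class of C' has size at most n ⌈/⌉ r
  have hbound : ∀ i : Fin r, (C' i).card ≤ n ⌈/⌉ r := by
    intro i
    rw [Nat.ceilDiv_eq_add_pred_div, Nat.le_div_iff_mul_le hr]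
    -- every class has size ≥ (C' i).card - 1
    have hlow : ∀ j : Fin r, ((C' i).card : ℤ) - 1 ≤ ((C' j).card : ℤ) := by
      intro j
      have h := abs_le.mp (heq i j)
      omega
    have hsplit : (∑ j : Fin r, ((C' j).card : ℤ))
        = ((C' i).card : ℤ) + ∑ j ∈ Finset.univ.erase i, ((C' j).card : ℤ) := by
      exact (Finset.add_sum_erase _ _ (Finset.mem_univ i)).symm
    have hcarderase : (Finset.univ.erase i).card = r - 1 := by
      rw [Finset.card_erase_of_mem (Finset.mem_univ i), Finset.card_univ, Fintype.card_fin]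
    have hge : ((r - 1 : ℕ) : ℤ) * (((C' i).card : ℤ) - 1)
        ≤ ∑ j ∈ Finset.univ.erase i, ((C' j).card : ℤ) := by
      calc ((r - 1 : ℕ) : ℤ) * (((C' i).card : ℤ) - 1)
          = (Finset.univ.erase i).card * (((C' i).card : ℤ) - 1) := by rw [hcarderase]
        _ ≤ ∑ j ∈ Finset.univ.erase i, ((C' j).card : ℤ) := by
            rw [← nsmul_eq_mul]
            exact Finset.card_nsmul_le_sum _ _ _ (fun j _ => hlow j)
    have hsz : (∑ j : Fin r, ((C' j).card : ℤ)) = (n : ℤ) := by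
      rw [← Nat.cast_sum, hsum]
    have : ((C' i).card : ℤ) + ((r - 1 : ℕ) : ℤ) * (((C' i).card : ℤ) - 1) ≤ (n : ℤ) := by
      rw [← hsz, hsplit]
      exact add_le_add (le_refl _) hge
    have hr1 : ((r - 1 : ℕ) : ℤ) = (r : ℤ) - 1 := by
      have : 1 ≤ r := hr
      push_cast [Nat.cast_sub this]
      ring
    rw [hr1] at this
    -- now pure arithmetic over ℤ
    have hzr : (1 : ℤ) ≤ (r : ℤ) := by exact_mod_cast hr
    have key : ((C' i).card : ℤ) * r ≤ (n : ℤ) + r - 1 := by nlinarith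
    have hcast : ((n + r - 1 : ℕ) : ℤ) = (n : ℤ) + r - 1 := by omega
    rw [← Nat.cast_le (α := ℤ), Nat.cast_mul, hcast]
    exact key
  -- the extension gives the bound for each class of C
  have hCbound : ∀ j : Fin k, (C j).card ≤ n ⌈/⌉ r := fun j =>
    le_trans (Finset.card_le_card (hext j)) (hbound _)
  -- eqChrom G ≤ r, hence max k LB ≤ r
  have hchrom : eqChrom G ≤ r := Nat.sInf_le ⟨C', ⟨⟨hne, hind, hdisj⟩, hcover, heq⟩⟩
  have hdr : max k LB ≤ r := max_le hkr (le_trans hLB hchrom)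
  have hd : 0 < max k LB := lt_of_lt_of_le hk (le_max_left _ _)
  -- monotonicity of ceiling division in the divisor
  have hmono : n ⌈/⌉ r ≤ n ⌈/⌉ max k LB := by
    rw [ceilDiv_le_iff_le_mul hr]
    have h1 : n ≤ max k LB * (n ⌈/⌉ max k LB) := by
      have := le_smul_ceilDiv (a := max k LB) (b := n) hd
      simpa using this
    exact le_trans h1 (Nat.mul_le_mul_right _ hdr)
  rw [hM]
  exact Finset.sup_le fun j _ => le_trans (hCbound j) hmono
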